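/- arXiv:2511.03134 — 2 statements merged into one kernel-verified Lean document; each statement's English description precedes it below -/
import Mathlib

section
/- Let x : ℝ → ℝ be a continuously differentiable 2π-periodic function satisfying x(t+π) = x(t) for all t and ∫₀^{2π} x(t) dt = 0. Then ∫₀^{2π} x(t)² dt ≤ (1/4) ∫₀^{2π} x'(t)² dt. -/
open Real MeasureTheory Complex intervalIntegral

noncomputable instance : Fact (0 < 2 * Real.pi) := ⟨by positivity⟩

/-- Bridge: Fourier coefficient of the periodic lift equals `fourierCoeffOn`. -/
lemma coeff_lift_eq {f : ℝ → ℂ} (hf : Function.Periodic f (2 * Real.pi)) (n : ℤ) :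
    fourierCoeff (hf.lift) n
      = fourierCoeffOn (by positivity : (0:ℝ) < 2 * Real.pi) f n := by
  rw [fourierCoeff_eq_intervalIntegral _ n 0, fourierCoeffOn_eq_integral]
  simp only [zero_add, Function.Periodic.lift_coe, fourier_coe_apply, sub_zero]

/-- Parseval in interval form for a continuous periodic function. -/
lemma parseval_interval {f : ℝ → ℂ} (hf : Function.Periodic f (2 * Real.pi))
    (hc : Continuous f) :
    ∑' n : ℤ, ‖fourierCoeff (hf.lift) n‖ ^ 2
      = (1 / (2 * Real.pi)) * ∫ t in (0:ℝ)..(2 * Real.pi), ‖f t‖ ^ 2 := by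
  have hπ : (0:ℝ) < 2 * Real.pi := by positivity
  have hcont : Continuous hf.lift := continuous_coinduced_dom.mpr hc
  set F : C(AddCircle (2 * Real.pi), ℂ) := ⟨hf.lift, hcont⟩ with hF
  have h1 := tsum_sq_fourierCoeff (ContinuousMap.toLp (E := ℂ) 2 AddCircle.haarAddCircle ℂ F)
  simp_rw [fourierCoeff_toLp] at h1
  have h2 : (∫ t : AddCircle (2 * Real.pi),
        ‖(ContinuousMap.toLp (E := ℂ) 2 AddCircle.haarAddCircle ℂ F : Lp ℂ 2 AddCircle.haarAddCircle) t‖ ^ 2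
        ∂AddCircle.haarAddCircle)
      = ∫ t : AddCircle (2 * Real.pi), ‖F t‖ ^ 2 ∂AddCircle.haarAddCircle := by
    apply MeasureTheory.integral_congr_ae
    filter_upwards [ContinuousMap.coeFn_toLp (p := 2) AddCircle.haarAddCircle (𝕜 := ℂ) F] with t ht
    rw [ht]
  have h3 : (∫ t : AddCircle (2 * Real.pi), ‖F t‖ ^ 2 ∂AddCircle.haarAddCircle)
      = (1 / (2 * Real.pi)) * ∫ t : AddCircle (2 * Real.pi), ‖F t‖ ^ 2 := by
    rw [AddCircle.volume_eq_smul_haarAddCircle, MeasureTheory.integral_smul_measure,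
      ENNReal.toReal_ofReal hπ.le, smul_eq_mul]
    field_simp
  have h4 : (∫ t : AddCircle (2 * Real.pi), ‖F t‖ ^ 2)
      = ∫ t in (0:ℝ)..(2 * Real.pi), ‖f t‖ ^ 2 := by
    rw [← AddCircle.intervalIntegral_preimage (2 * Real.pi) 0 (fun z => ‖F z‖ ^ 2)]
    simp only [zero_add, hF, ContinuousMap.coe_mk, Function.Periodic.lift_coe]
  have hFc : (⇑F : AddCircle (2 * Real.pi) → ℂ) = hf.lift := rfl
  rw [hFc] at h1
  rw [h1, h2, h3, h4]

lemma summable_sq_coeff {f : ℝ → ℂ} (hf : Function.Periodic f (2 * Real.pi))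
    (hc : Continuous f) :
    Summable (fun n : ℤ => ‖fourierCoeff (hf.lift) n‖ ^ 2) := by
  have hcont : Continuous hf.lift := continuous_coinduced_dom.mpr hc
  set F : C(AddCircle (2 * Real.pi), ℂ) := ⟨hf.lift, hcont⟩ with hF
  set FL := ContinuousMap.toLp (E := ℂ) 2 AddCircle.haarAddCircle ℂ F with hFL
  have h := (lp.memℓp (fourierBasis.repr FL)).summable
    (by norm_num : (0:ℝ) < (2 : ENNReal).toReal)
  refine Summable.congr h (fun n => ?_)
  rw [fourierBasis_repr]
  have he : fourierCoeff (FL : AddCircle (2 * Real.pi) → ℂ) n = fourierCoeff (hf.lift) n := by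
    rw [hFL, fourierCoeff_toLp]
    rfl
  rw [he]
  norm_num

/-- First-component Poincaré estimate: if `x : ℝ → ℝ` is `C¹`, `2π`-periodic,
`π`-periodic (`x (t + π) = x t`) and has zero mean on `[0, 2π]`, then
`∫₀^{2π} x² ≤ (1/4) ∫₀^{2π} x'²`. -/
theorem poincare_even_harmonics (x : ℝ → ℝ) (hx : ContDiff ℝ 1 x)
    (hper : Function.Periodic x (2 * π))
    (hAx : ∀ t, x (t + π) = x t)
    (hmean : ∫ t in (0:ℝ)..(2 * π), x t = 0) :
    ∫ t in (0:ℝ)..(2 * π), x t ^ 2 ≤ (1 / 4) * ∫ t in (0:ℝ)..(2 * π), deriv x t ^ 2 := by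
  have hπ : (0:ℝ) < 2 * π := by positivity
  set f : ℝ → ℂ := fun t => (x t : ℂ) with hfdef
  set g : ℝ → ℂ := fun t => ((deriv x t : ℝ) : ℂ) with hgdef
  have hxder : ∀ t, HasDerivAt x (deriv x t) t :=
    fun t => (hx.differentiable one_ne_zero t).hasDerivAt
  have hdper : Function.Periodic (deriv x) (2 * π) := by
    intro t
    have : deriv (fun s => x (s + 2 * π)) t = deriv x (t + 2 * π) := by
      rw [deriv_comp_add_const]
    rw [← this]
    congr 1
    funext s
    exact hper s
  have hf : Function.Periodic f (2 * π) := fun t => by simp [hfdef, hper t]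
  have hg : Function.Periodic g (2 * π) := fun t => by simp [hgdef, hdper t]
  have hfc : Continuous f := Complex.continuous_ofReal.comp hx.continuous
  have hgc : Continuous g := Complex.continuous_ofReal.comp (hx.continuous_deriv le_rfl)
  -- coefficient of derivative
  have hrel : ∀ n : ℤ, n ≠ 0 →
      fourierCoeff (hg.lift) n = Complex.I * n * fourierCoeff (hf.lift) n := by
    intro n hn
    rw [coeff_lift_eq hf, coeff_lift_eq hg]
    have hfd : ∀ t, t ∈ Set.uIcc (0:ℝ) (2*π) → HasDerivAt f (g t) t :=
      fun t _ => (hxder t).ofReal_comp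
    have H := fourierCoeffOn_of_hasDerivAt hπ hn hfd (hgc.intervalIntegrable _ _)
    have hfp : f (2*π) = f 0 := by simpa using hf 0
    rw [hfp, sub_self, mul_zero, zero_sub] at H
    rw [H]
    have hπ0 : ((Real.pi : ℂ)) ≠ 0 := Complex.ofReal_ne_zero.mpr Real.pi_ne_zero
    have hn0 : ((n : ℂ)) ≠ 0 := Int.cast_ne_zero.mpr hn
    push_cast
    field_simp
    ring
  -- zero mean
  have h0 : fourierCoeff (hf.lift) 0 = 0 := by
    rw [fourierCoeff_eq_intervalIntegral _ 0 0]
    simp only [neg_zero, fourier_zero, one_smul, zero_add, Function.Periodic.lift_coe]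
    rw [hfdef]
    rw [intervalIntegral.integral_ofReal]
    rw [hmean]
    simp
  -- odd coefficients vanish
  have hodd : ∀ n : ℤ, Odd n → fourierCoeff (hf.lift) n = 0 := by
    intro n hno
    rw [fourierCoeff_eq_intervalIntegral _ n 0]
    simp only [zero_add, Function.Periodic.lift_coe]
    set φ : ℝ → ℂ := fun t => fourier (-n) (t : AddCircle (2*π)) • f t with hφdef
    have hφper : Function.Periodic φ (2*π) := by
      intro t
      simp only [hφdef]
      rw [AddCircle.coe_add_period, hf t]
    have hshift : (∫ t in (0:ℝ)..(2*π), φ t) = ∫ t in (0:ℝ)..(2*π), φ (t + π) := by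
      rw [intervalIntegral.integral_comp_add_right φ π]
      have := hφper.intervalIntegral_add_eq π 0
      rw [zero_add] at this
      rw [← this]
      norm_num
      congr 1
      ring
    have hval : ∀ t : ℝ, φ (t + π) = -φ t := by
      intro t
      have hfp : f (t + π) = f t := by
        simp only [hfdef]
        exact congrArg _ (hAx t)
      simp only [hφdef, smul_eq_mul, fourier_coe_apply, hfp]
      have hexp : Complex.exp (2 * (π:ℂ) * Complex.I * ((-n : ℤ) : ℂ) * ((t + π : ℝ) : ℂ) / ((2 * π : ℝ) : ℂ))
          = -Complex.exp (2 * (π:ℂ) * Complex.I * ((-n : ℤ) : ℂ) * ((t : ℝ) : ℂ) / ((2 * π : ℝ) : ℂ)) := by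
        obtain ⟨k, hk⟩ := hno
        have hπ0 : ((π:ℝ) : ℂ) ≠ 0 := Complex.ofReal_ne_zero.mpr Real.pi_ne_zero
        have hnc : ((n:ℤ) : ℂ) = 2 * (k : ℂ) + 1 := by
          rw [hk]; push_cast; ring
        have e1 : 2 * (π:ℂ) * Complex.I * ((-n : ℤ) : ℂ) * ((t + π : ℝ) : ℂ) / ((2 * π : ℝ) : ℂ)
            = 2 * (π:ℂ) * Complex.I * ((-n : ℤ) : ℂ) * ((t : ℝ) : ℂ) / ((2 * π : ℝ) : ℂ)
              + (((-k : ℤ) : ℂ) * (2 * (π:ℂ) * Complex.I) + -((π:ℂ) * Complex.I)) := by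
          push_cast [hnc]
          field_simp
          ring
        rw [e1, Complex.exp_add, Complex.exp_add, Complex.exp_int_mul_two_pi_mul_I,
          Complex.exp_neg, Complex.exp_pi_mul_I]
        norm_num
      rw [hexp]
      ring
    have : (∫ t in (0:ℝ)..(2*π), φ t) = 0 := by
      have h1 : (∫ t in (0:ℝ)..(2*π), φ (t + π)) = -∫ t in (0:ℝ)..(2*π), φ t := by
        rw [intervalIntegral.integral_congr (fun t _ => hval t)]
        exact intervalIntegral.integral_neg
      have := hshift
      rw [h1] at this
      linear_combination this / 2
    rw [this]
    simp
  -- termwise inequality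
  have hterm : ∀ n : ℤ,
      ‖fourierCoeff (hf.lift) n‖ ^ 2 ≤ (1/4) * ‖fourierCoeff (hg.lift) n‖ ^ 2 := by
    intro n
    rcases eq_or_ne n 0 with rfl | hn
    · rw [h0]
      have : (0:ℝ) ≤ (1/4) * ‖fourierCoeff hg.lift 0‖^2 := by positivity
      simpa using this
    rcases Int.even_or_odd n with he | ho
    · have h2 : (2:ℝ) ≤ |(n:ℝ)| := by
        have h2' : (2:ℤ) ≤ |n| := by
          rcases he with ⟨k, rfl⟩
          have hk : k ≠ 0 := by rintro rfl; simp at hn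
          have h1 : 1 ≤ |k| := Int.one_le_abs hk
          have hkk : k + k = 2 * k := by ring
          rw [hkk, abs_mul]
          have : |(2:ℤ)| = 2 := by norm_num
          rw [this]
          linarith
        calc (2:ℝ) = ((2:ℤ):ℝ) := by norm_num
          _ ≤ ((|n| : ℤ) : ℝ) := by exact_mod_cast h2'
          _ = |(n:ℝ)| := by rw [Int.cast_abs]
      rw [hrel n hn]
      have hnorm : ‖Complex.I * (n:ℂ) * fourierCoeff hf.lift n‖
          = |(n:ℝ)| * ‖fourierCoeff hf.lift n‖ := by
        rw [norm_mul, norm_mul, Complex.norm_I, one_mul]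
        norm_num
      rw [hnorm, mul_pow]
      have h4 : (4:ℝ) ≤ |(n:ℝ)|^2 := by nlinarith
      nlinarith [mul_le_mul_of_nonneg_right h4 (sq_nonneg ‖fourierCoeff hf.lift n‖)]
    · rw [hodd n ho]
      have : (0:ℝ) ≤ (1/4) * ‖fourierCoeff hg.lift n‖^2 := by positivity
      simpa using this
  -- Parseval on both sides
  have hP1 := parseval_interval hf hfc
  have hP2 := parseval_interval hg hgc
  have key : ∑' n : ℤ, ‖fourierCoeff (hf.lift) n‖ ^ 2
      ≤ (1/4) * ∑' n : ℤ, ‖fourierCoeff (hg.lift) n‖ ^ 2 := by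
    rw [← tsum_mul_left]
    exact Summable.tsum_le_tsum hterm (summable_sq_coeff hf hfc)
      ((summable_sq_coeff hg hgc).mul_left _)
  rw [hP1, hP2] at key
  have e1 : (∫ t in (0:ℝ)..(2 * π), ‖f t‖ ^ 2) = ∫ t in (0:ℝ)..(2 * π), x t ^ 2 :=
    intervalIntegral.integral_congr fun t _ => by
      simp [hfdef, Complex.norm_real, Real.norm_eq_abs, _root_.sq_abs]
  have e2 : (∫ t in (0:ℝ)..(2 * π), ‖g t‖ ^ 2) = ∫ t in (0:ℝ)..(2 * π), deriv x t ^ 2 :=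
    intervalIntegral.integral_congr fun t _ => by
      simp [hgdef, Complex.norm_real, Real.norm_eq_abs, _root_.sq_abs]
  rw [e1, e2] at key
  have hkey' := mul_le_mul_of_nonneg_left key (le_of_lt hπ)
  have hne : (2*π) ≠ 0 := ne_of_gt hπ
  calc (∫ t in (0:ℝ)..(2 * π), x t ^ 2)
      = (2*π) * ((1/(2*π)) * ∫ t in (0:ℝ)..(2 * π), x t ^ 2) := by
        field_simp
    _ ≤ (2*π) * ((1/4) * ((1/(2*π)) * ∫ t in (0:ℝ)..(2 * π), deriv x t ^ 2)) := hkey'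
    _ = (1/4) * ∫ t in (0:ℝ)..(2 * π), deriv x t ^ 2 := by
        field_simp
end

section
/- Let y : ℝ → ℝ be a continuously differentiable 2π-periodic function satisfying y(t+π) = -y(t) for all t. Then ∫₀^{2π} y(t)² dt ≤ ∫₀^{2π} y'(t)² dt. -/
open Real MeasureTheory Complex intervalIntegral Set AddCircle

section helpers
variable {T : ℝ} [hT : Fact (0 < T)]

lemma lift_eq_liftIoc (g : ℝ → ℂ) (hg : Function.Periodic g T) :
    AddCircle.liftIoc T 0 g = hg.lift := by
  ext z
  induction z using QuotientAddGroup.induction_on with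
  | H x =>
    have hmem := toIocMod_mem_Ioc hT.out 0 x
    have hcoe : ((toIocMod hT.out 0 x : ℝ) : AddCircle T) = (x : AddCircle T) := by
      rw [QuotientAddGroup.eq]
      have h1 : x - toIocMod hT.out 0 x = toIocDiv hT.out 0 x • T := self_sub_toIocMod hT.out 0 x
      have h2 : -toIocMod hT.out 0 x + x = toIocDiv hT.out 0 x • T := by
        rw [← h1]; ring
      rw [h2]
      exact AddSubgroup.zsmul_mem_zmultiples T _
    rw [← hcoe, AddCircle.liftIoc_coe_apply hmem, Function.Periodic.lift_coe]

lemma fourierCoeff_lift_eq (g : ℝ → ℂ) (hg : Function.Periodic g T) (n : ℤ) :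
    fourierCoeff hg.lift n = fourierCoeffOn (lt_add_of_pos_right 0 hT.out) g n := by
  rw [← lift_eq_liftIoc g hg, fourierCoeff_liftIoc_eq]

lemma parseval_cont (g : C(AddCircle T, ℂ)) :
    ∑' n : ℤ, ‖fourierCoeff (⇑g) n‖ ^ 2
      = (1 / T) * ∫ x in (0:ℝ)..(0 + T), ‖g x‖ ^ 2 := by
  have h := tsum_sq_fourierCoeff (ContinuousMap.toLp (E := ℂ) 2 haarAddCircle ℂ g)
  simp_rw [fourierCoeff_toLp] at h
  rw [h]
  have hae : ∀ᵐ t ∂(haarAddCircle : Measure (AddCircle T)),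
      ‖(ContinuousMap.toLp (E := ℂ) 2 haarAddCircle ℂ g : AddCircle T → ℂ) t‖ ^ 2
        = ‖g t‖ ^ 2 := by
    filter_upwards [ContinuousMap.coeFn_toLp (p := 2) haarAddCircle (𝕜 := ℂ) g] with t ht
    rw [ht]
  rw [integral_congr_ae hae]
  have hvol : ∫ x in (0:ℝ)..(0 + T), ‖g x‖ ^ 2
      = ∫ z : AddCircle T, ‖g z‖ ^ 2 ∂volume :=
    AddCircle.intervalIntegral_preimage T 0 (fun z => ‖g z‖ ^ 2)
  rw [hvol, AddCircle.volume_eq_smul_haarAddCircle,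
    MeasureTheory.integral_smul_measure, ENNReal.toReal_ofReal hT.out.le, smul_eq_mul,
    ← mul_assoc, one_div, inv_mul_cancel₀ hT.out.ne', one_mul]

lemma summable_sq_fourierCoeff (g : C(AddCircle T, ℂ)) :
    Summable fun n : ℤ => ‖fourierCoeff (⇑g) n‖ ^ 2 := by
  have hmem := lp.memℓp (fourierBasis.repr (ContinuousMap.toLp (E := ℂ) 2 haarAddCircle ℂ g))
  have h := hmem.summable (p := 2) (by norm_num)
  simp only [fourierBasis_repr, fourierCoeff_toLp] at h
  have heq : ∀ n : ℤ, ‖fourierCoeff (⇑g) n‖ ^ ((2:ENNReal).toReal) = ‖fourierCoeff (⇑g) n‖ ^ 2 := by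
    intro n
    rw [show ((2:ENNReal).toReal) = ((2:ℕ):ℝ) by norm_num, Real.rpow_natCast]
  exact h.congr fun n => heq n

end helpers

/-- Second-component Poincaré estimate: if `y : ℝ → ℝ` is `C¹`, `2π`-periodic and
`π`-antiperiodic (`y (t + π) = -y t`), then `∫₀^{2π} y² ≤ ∫₀^{2π} y'²`. -/
theorem poincare_odd_harmonics (y : ℝ → ℝ) (hy : ContDiff ℝ 1 y)
    (hper : Function.Periodic y (2 * π))
    (hanti : ∀ t, y (t + π) = - y t) :
    ∫ t in (0:ℝ)..(2 * π), y t ^ 2 ≤ ∫ t in (0:ℝ)..(2 * π), deriv y t ^ 2 := by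
  have hπ : (0:ℝ) < 2 * π := by positivity
  haveI hT : Fact (0 < 2 * π) := ⟨hπ⟩
  set f : ℝ → ℂ := fun t => (y t : ℂ) with hf_def
  set f' : ℝ → ℂ := fun t => ((deriv y t : ℝ) : ℂ) with hf'_def
  have hyc : Continuous y := hy.continuous
  have hy'c : Continuous (deriv y) := hy.continuous_deriv le_rfl
  have hdy : ∀ t, HasDerivAt y (deriv y t) t := fun t =>
    ((hy.differentiable one_ne_zero) t).hasDerivAt
  have hdf : ∀ t, HasDerivAt f (f' t) t := fun t => (hdy t).ofReal_comp
  have hperf : Function.Periodic f (2 * π) := fun t => by simp [f, hper t]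
  have hper' : Function.Periodic (deriv y) (2 * π) := by
    intro t
    have h1 : deriv (fun s => y (s + 2 * π)) t = deriv y (t + 2 * π) :=
      deriv_comp_add_const y (2 * π) t
    have h2 : (fun s => y (s + 2 * π)) = y := funext fun s => hper s
    rw [h2] at h1
    exact h1.symm
  have hperf' : Function.Periodic f' (2 * π) := fun t => by simp [f', hper' t]
  set Y : C(AddCircle (2 * π), ℂ) :=
    ⟨hperf.lift, continuous_coinduced_dom.mpr (Complex.continuous_ofReal.comp hyc)⟩ with hY_def
  set Y' : C(AddCircle (2 * π), ℂ) :=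
    ⟨hperf'.lift, continuous_coinduced_dom.mpr (Complex.continuous_ofReal.comp hy'c)⟩ with hY'_def
  have hab : (0:ℝ) < 0 + 2 * π := lt_add_of_pos_right 0 hT.out
  have hcY : ∀ n, fourierCoeff (⇑Y) n = fourierCoeffOn hab f n := fun n =>
    fourierCoeff_lift_eq f hperf n
  have hcY' : ∀ n, fourierCoeff (⇑Y') n = fourierCoeffOn hab f' n := fun n =>
    fourierCoeff_lift_eq f' hperf' n
  -- zeroth coefficient vanishes by antiperiodicity
  have hanti' : ∀ z : AddCircle (2 * π), Y (z + (π : ℝ)) = - Y z := by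
    intro z
    induction z using QuotientAddGroup.induction_on with
    | H x =>
      show hperf.lift ((x : AddCircle (2*π)) + ((π:ℝ) : AddCircle (2*π))) = - hperf.lift _
      rw [← AddCircle.coe_add, Function.Periodic.lift_coe, Function.Periodic.lift_coe]
      simp [f, hanti x]
  have hc0 : fourierCoeff (⇑Y) 0 = 0 := by
    have : fourierCoeff (⇑Y) 0 = ∫ z : AddCircle (2*π), Y z ∂haarAddCircle := by
      rw [fourierCoeff]
      congr 1
      ext z
      simp
    rw [this]
    exact integral_eq_zero_of_add_right_eq_neg hanti'
  -- derivative relation for n ≠ 0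
  have hterm : ∀ n : ℤ, ‖fourierCoeff (⇑Y) n‖ ^ 2 ≤ ‖fourierCoeff (⇑Y') n‖ ^ 2 := by
    intro n
    rcases eq_or_ne n 0 with rfl | hn
    · rw [hc0]; simp --  ‖fourierCoeff (⇑Y') 0‖
    · have hIBP := fourierCoeffOn_of_hasDerivAt hab hn
        (fun x _ => hdf x) ((Complex.continuous_ofReal.comp hy'c).intervalIntegrable 0 (0 + 2*π))
      have hfb : f (0 + 2 * π) - f 0 = 0 := by
        simp only [f]
        rw [hper 0]
        ring
      rw [hfb, mul_zero, zero_sub] at hIBP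
      have hrel : fourierCoeffOn hab f n = (1 / (Complex.I * n)) * fourierCoeffOn hab f' n := by
        rw [hIBP]
        have hπC : ((π:ℝ) : ℂ) ≠ 0 := Complex.ofReal_ne_zero.mpr Real.pi_ne_zero
        have hnC : ((n:ℤ) : ℂ) ≠ 0 := Int.cast_ne_zero.mpr hn
        push_cast
        field_simp
        ring
      have hnorm : ‖fourierCoeff (⇑Y) n‖ = ‖fourierCoeff (⇑Y') n‖ / |(n:ℝ)| := by
        rw [hcY, hcY', hrel, norm_mul, norm_div, norm_one]
        rw [norm_mul, Complex.norm_I, one_mul]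
        rw [show ‖((n:ℤ):ℂ)‖ = |(n:ℝ)| by
          rw [← Complex.ofReal_intCast, Complex.norm_real, Real.norm_eq_abs]]
        ring
      have h1n : (1:ℝ) ≤ |(n:ℝ)| := by
        rw [← Int.cast_abs]
        exact_mod_cast Int.one_le_abs hn
      have : ‖fourierCoeff (⇑Y) n‖ ≤ ‖fourierCoeff (⇑Y') n‖ := by
        rw [hnorm]
        calc ‖fourierCoeff (⇑Y') n‖ / |(n:ℝ)| ≤ ‖fourierCoeff (⇑Y') n‖ / 1 :=
              div_le_div_of_nonneg_left (norm_nonneg _) (by linarith) h1n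
          _ = _ := by rw [div_one]
      exact pow_le_pow_left₀ (norm_nonneg _) this 2
  -- Parseval on both sides
  have hPY : ∑' n : ℤ, ‖fourierCoeff (⇑Y) n‖ ^ 2
      = (1 / (2 * π)) * ∫ t in (0:ℝ)..(2 * π), y t ^ 2 := by
    rw [parseval_cont Y]
    congr 1
    rw [zero_add]
    refine intervalIntegral.integral_congr fun x _ => ?_
    show ‖hperf.lift ((x:ℝ) : AddCircle (2*π))‖ ^ 2 = y x ^ 2
    rw [Function.Periodic.lift_coe]
    simp [f, Complex.norm_real, Real.norm_eq_abs, _root_.sq_abs]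
  have hPY' : ∑' n : ℤ, ‖fourierCoeff (⇑Y') n‖ ^ 2
      = (1 / (2 * π)) * ∫ t in (0:ℝ)..(2 * π), deriv y t ^ 2 := by
    rw [parseval_cont Y']
    congr 1
    rw [zero_add]
    refine intervalIntegral.integral_congr fun x _ => ?_
    show ‖hperf'.lift ((x:ℝ) : AddCircle (2*π))‖ ^ 2 = deriv y x ^ 2
    rw [Function.Periodic.lift_coe]
    simp [f', Complex.norm_real, Real.norm_eq_abs, _root_.sq_abs]
  have key := Summable.tsum_le_tsum hterm (summable_sq_fourierCoeff Y) (summable_sq_fourierCoeff Y')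
  rw [hPY, hPY'] at key
  have hpos : (0:ℝ) < 1 / (2 * π) := by positivity
  exact (mul_le_mul_iff_right₀ hpos).mp key
end
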